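/- Let A be a real d × s matrix of rank d, and let J ⊆ {1,…,s} with #J = d−1 be such that the submatrix A_J of columns indexed by J has rank d−1. Define the vector r_J ∈ ℝ^s by r_{J,ℓ} = (−1)^{μ(ℓ,J)} det(A_{J∪{ℓ}}) for each ℓ, where μ(ℓ,J) is the sign of the permutation sorting ℓ followed by the ordered elements of J. Then r_J is a nonzero element of the row span of A whose support is minimal with respect to inclusion among supports of nonzero elements of the row span of A (i.e., r_J is a circuit of A). -/

import Mathlib

open Matrix Module Submodule

private theorem key {n s : ℕ} (A : Matrix (Fin (n + 1)) (Fin s) ℝ)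
    (hA : A.rank = n + 1) (J : Finset (Fin s)) (hJ : J.card = n)
    (hAJ : (A.submatrix id (fun j : {x // x ∈ J} => (j : Fin s))).rank = n)
    (cols : Fin s → Fin (n + 1) → Fin s)
    (h0 : ∀ ℓ (k : Fin (n + 1)), (k : ℕ) = 0 → cols ℓ k = ℓ)
    (h1 : ∀ ℓ (k : Fin (n + 1)), (k : ℕ) ≠ 0 → ∀ hk : (k : ℕ) - 1 < n,
      cols ℓ k = J.orderEmbOfFin hJ ⟨(k : ℕ) - 1, hk⟩)
    (r : Fin s → ℝ) (hr : ∀ ℓ, r ℓ = (A.submatrix id (cols ℓ)).det) :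
    r ≠ 0 ∧ r ∈ Submodule.span ℝ (Set.range fun k => A k) ∧
      ∀ w ∈ Submodule.span ℝ (Set.range fun k => A k), w ≠ 0 →
        {i | w i ≠ 0} ⊆ {i | r i ≠ 0} → {i | w i ≠ 0} = {i | r i ≠ 0} := by
  have hsucc : ∀ ℓ (m : Fin n), cols ℓ m.succ = J.orderEmbOfFin hJ m := by
    intro ℓ m
    rw [h1 ℓ m.succ (by simp) (by simpa using m.isLt)]
    exact congrArg _ (Fin.ext (by simp))
  have hs : 0 < s := by
    rcases Nat.eq_zero_or_pos s with h | h
    · exfalso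
      subst h
      have := A.rank_le_card_width
      rw [hA] at this
      simp at this
    · exact h
  set ℓ0 : Fin s := ⟨0, hs⟩ with hℓ0
  set B : Matrix (Fin (n + 1)) (Fin (n + 1)) ℝ := A.submatrix id (cols ℓ0) with hB
  set c : Fin (n + 1) → ℝ :=
    fun i => B.cramer (fun j => if i = j then (1 : ℝ) else 0) 0 with hc
  have hupdate : ∀ ℓ, A.submatrix id (cols ℓ) = B.updateCol 0 fun i => A i ℓ := by
    intro ℓ
    ext i k
    rcases eq_or_ne k 0 with rfl | hk
    · simp [updateCol_apply, h0 ℓ 0 (by simp)]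
    · have hk' : (k : ℕ) ≠ 0 := fun h => hk (Fin.ext (by simp [h]))
      have hk2 : (k : ℕ) - 1 < n := by have := k.isLt; omega
      simp [updateCol_apply, if_neg hk, hB, h1 ℓ k hk' hk2, h1 ℓ0 k hk' hk2]
  have ha : ∀ ℓ, r ℓ = ∑ i, A i ℓ * c i := by
    intro ℓ
    rw [hr, hupdate, ← cramer_apply]
    conv_lhs => rw [pi_eq_sum_univ (fun i => A i ℓ)]
    rw [map_sum, Finset.sum_apply]
    refine Finset.sum_congr rfl fun i _ => ?_
    rw [LinearMap.map_smul]
    simp [hc]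
  have hrJ : ∀ j ∈ J, r j = 0 := by
    intro j hj
    obtain ⟨m, hm⟩ : ∃ m, J.orderEmbOfFin hJ m = j := by
      have h := J.range_orderEmbOfFin hJ
      have : j ∈ Set.range (J.orderEmbOfFin hJ) := by rw [h]; exact_mod_cast hj
      exact this
    rw [hr]
    refine det_zero_of_column_eq (M := A.submatrix id (cols j))
      (i := (0 : Fin (n + 1))) (j := m.succ) (Fin.succ_ne_zero m).symm fun k => ?_
    rw [submatrix_apply, submatrix_apply, h0 _ _ (by simp), hsucc, hm]
  set A_J : Matrix (Fin (n + 1)) {x // x ∈ J} ℝ :=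
    A.submatrix id (fun j : {x // x ∈ J} => (j : Fin s)) with hAJdef
  have hcard : Fintype.card {x // x ∈ J} = n := by simp [hJ]
  have hkerAJ : LinearMap.ker A_J.mulVecLin = ⊥ := by
    have h2 := LinearMap.finrank_range_add_finrank_ker A_J.mulVecLin
    rw [Module.finrank_fintype_fun_eq_card, hcard] at h2
    have h3 : finrank ℝ (LinearMap.range A_J.mulVecLin) = n := by
      unfold Matrix.rank at hAJ
      exact hAJ
    have h4 : finrank ℝ (LinearMap.ker A_J.mulVecLin) = 0 := by omega
    exact Submodule.finrank_eq_zero.mp h4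
  have hUind : LinearIndependent ℝ
      (fun j : {x // x ∈ J} => fun i => A i (j : Fin s)) := by
    rw [Fintype.linearIndependent_iff]
    intro g hg
    have hmv : A_J.mulVecLin g = 0 := by
      funext i
      have h5 := congrFun hg i
      rw [Finset.sum_apply] at h5
      simp only [Pi.smul_apply, smul_eq_mul] at h5
      simp only [mulVecLin_apply, mulVec, dotProduct, hAJdef, submatrix_apply, id_eq,
        Pi.zero_apply]
      simpa [mul_comm] using h5
    have hbot : g ∈ (⊥ : Submodule ℝ ({x // x ∈ J} → ℝ)) := by
      rw [← hkerAJ]; exact LinearMap.mem_ker.mpr hmv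
    have hg0 : g = 0 := by simpa using hbot
    intro j; rw [hg0]; rfl
  set u : Fin n → (Fin (n + 1) → ℝ) :=
    fun m i => A i (J.orderEmbOfFin hJ m) with hu
  have huind : LinearIndependent ℝ u := by
    have heq : u = (fun j : {x // x ∈ J} => fun i => A i (j : Fin s)) ∘
        (fun m => (⟨J.orderEmbOfFin hJ m, J.orderEmbOfFin_mem hJ m⟩ : {x // x ∈ J})) := rfl
    rw [heq]
    exact hUind.comp _ (fun a b hab =>
      (J.orderEmbOfFin hJ).injective (congrArg Subtype.val hab))
  have hspan_top : Submodule.span ℝ (Set.range Aᵀ) = ⊤ := by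
    apply Submodule.eq_top_of_finrank_eq
    rw [show Set.range Aᵀ = Set.range A.col from rfl, ← Matrix.rank_eq_finrank_span_cols, hA, Module.finrank_fintype_fun_eq_card,
      Fintype.card_fin]
  have hex : ∃ ℓ, (fun i => A i ℓ) ∉ Submodule.span ℝ (Set.range u) := by
    by_contra hcon
    push_neg at hcon
    have hle : Submodule.span ℝ (Set.range Aᵀ) ≤ Submodule.span ℝ (Set.range u) := by
      rw [Submodule.span_le]
      rintro _ ⟨ℓ, rfl⟩
      exact hcon ℓ
    have h4 : finrank ℝ (Submodule.span ℝ (Set.range u)) ≤ n := by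
      simpa [Fintype.card_fin, Set.finrank] using finrank_range_le_card (R := ℝ) u
    have h5 := Submodule.finrank_mono hle
    rw [hspan_top, finrank_top, Module.finrank_fintype_fun_eq_card, Fintype.card_fin] at h5
    omega
  obtain ⟨ℓx, hv⟩ := hex
  have hdet : (A.submatrix id (cols ℓx)).det ≠ 0 := by
    have hT : (A.submatrix id (cols ℓx))ᵀ = Fin.cons (fun i => A i ℓx) u := by
      funext k
      refine Fin.cases ?_ (fun m => ?_) k
      · funext i
        rw [Fin.cons_zero, transpose_apply, submatrix_apply, h0 _ _ (by simp)]
        rfl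
      · funext i
        rw [Fin.cons_succ, transpose_apply, submatrix_apply, hsucc]
        rfl
    have hli : LinearIndependent ℝ (fun k => (A.submatrix id (cols ℓx))ᵀ k) := by
      rw [hT]
      exact linearIndependent_fin_cons.mpr ⟨huind, hv⟩
    have hunit := Matrix.linearIndependent_cols_iff_isUnit.mp hli
    exact ((Matrix.isUnit_iff_isUnit_det _).mp hunit).ne_zero
  have hrne : r ≠ 0 := by
    intro h
    exact hdet (by rw [← hr ℓx, h, Pi.zero_apply])
  have hc0 : c ≠ 0 := by
    intro h
    apply hrne
    funext ℓ
    rw [ha ℓ, h]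
    simp
  set f : (Fin (n + 1) → ℝ) →ₗ[ℝ] ({x // x ∈ J} → ℝ) := A_J.vecMulLinear with hf
  have hsum_r : ∀ (y : Fin (n + 1) → ℝ) (j : {x // x ∈ J}),
      (y ᵥ* A_J) j = ∑ i, y i * A i (j : Fin s) := by
    intro y j
    simp [vecMul, dotProduct, hAJdef]
  have hfc : f c = 0 := by
    funext j
    rw [hf, vecMulLinear_apply, hsum_r]
    have : ∑ i, c i * A i (j : Fin s) = r (j : Fin s) := by
      rw [ha]
      exact Finset.sum_congr rfl fun i _ => mul_comm _ _
    rw [this, hrJ _ j.2]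
    rfl
  have hker1 : finrank ℝ (LinearMap.ker f) = 1 := by
    have h2 := LinearMap.finrank_range_add_finrank_ker f
    rw [Module.finrank_fintype_fun_eq_card, Fintype.card_fin] at h2
    have h3 : finrank ℝ (LinearMap.range f) = n := by
      have he : f = (A_Jᵀ).mulVecLin := (mulVecLin_transpose A_J).symm
      rw [he]
      have h7 : (A_Jᵀ).rank = n := by rw [rank_transpose]; exact hAJ
      unfold Matrix.rank at h7
      exact h7
    omega
  have hkerspan : LinearMap.ker f = Submodule.span ℝ {c} := by
    symm
    apply Submodule.eq_of_le_of_finrank_le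
    · rw [Submodule.span_le, Set.singleton_subset_iff]
      exact LinearMap.mem_ker.mpr hfc
    · rw [hker1, finrank_span_singleton hc0]
  refine ⟨hrne, ?_, ?_⟩
  · refine (mem_span_range_iff_exists_fun ℝ).mpr ⟨c, ?_⟩
    funext ℓ
    rw [Finset.sum_apply, ha ℓ]
    exact Finset.sum_congr rfl fun i _ => by simp [mul_comm]
  · intro w hw hwne hsub
    obtain ⟨y, hy⟩ := (mem_span_range_iff_exists_fun ℝ).mp hw
    have hwJ : ∀ j ∈ J, w j = 0 := by
      intro j hj
      by_contra hne
      exact (hsub hne) (hrJ j hj)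
    have hyker : y ∈ LinearMap.ker f := by
      rw [LinearMap.mem_ker]
      funext j
      rw [hf, vecMulLinear_apply, hsum_r]
      have h6 : (∑ i, y i • A i) (j : Fin s) = w (j : Fin s) := congrFun hy _
      rw [Finset.sum_apply] at h6
      simp only [Pi.smul_apply, smul_eq_mul] at h6
      rw [h6, hwJ _ j.2]
      rfl
    rw [hkerspan] at hyker
    obtain ⟨t, ht⟩ := Submodule.mem_span_singleton.mp hyker
    have hyt : ∀ i, y i = t * c i := fun i => by rw [← ht]; simp
    have hwr : w = t • r := by
      funext ℓ
      rw [← hy, Finset.sum_apply, Pi.smul_apply, smul_eq_mul, ha ℓ, Finset.mul_sum]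
      refine Finset.sum_congr rfl fun i _ => ?_
      rw [Pi.smul_apply, smul_eq_mul, hyt i]
      ring
    have ht0 : t ≠ 0 := by
      rintro rfl
      apply hwne
      rw [hwr, zero_smul]
    ext i
    simp only [Set.mem_setOf_eq, hwr, Pi.smul_apply, smul_eq_mul]
    constructor
    · intro h hri
      exact h (by rw [hri, mul_zero])
    · intro h
      exact mul_ne_zero ht0 h

theorem stmt2 {d s : ℕ} (hd : 0 < d) (A : Matrix (Fin d) (Fin s) ℝ)
    (hA : A.rank = d) (J : Finset (Fin s)) (hJ : J.card = d - 1)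
    (hAJ : (A.submatrix id (fun j : {x // x ∈ J} => (j : Fin s))).rank = d - 1) :
    let cols : Fin s → Fin d → Fin s := fun ℓ k =>
      if hk : (k : ℕ) = 0 then ℓ
      else J.orderEmbOfFin hJ ⟨(k : ℕ) - 1, by have := k.isLt; omega⟩
    let r : Fin s → ℝ := fun ℓ => (A.submatrix id (cols ℓ)).det
    r ≠ 0 ∧ r ∈ Submodule.span ℝ (Set.range fun k => A k) ∧
      ∀ w ∈ Submodule.span ℝ (Set.range fun k => A k), w ≠ 0 →
        {i | w i ≠ 0} ⊆ {i | r i ≠ 0} → {i | w i ≠ 0} = {i | r i ≠ 0} := by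
  obtain ⟨n, rfl⟩ : ∃ n, d = n + 1 := ⟨d - 1, by omega⟩
  intro cols r
  exact key A hA J hJ hAJ cols
    (fun ℓ k hk => dif_pos hk)
    (fun ℓ k hk hk2 => dif_neg hk)
    r (fun ℓ => rfl)
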